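/- For every n ≥ 2, the tensor rank of the n-qubit W state equals n: rk(W_n) = n. -/

import Mathlib

namespace QIT

noncomputable section

/-- The coordinate description of the rank-one (simple) tensor
`v 1 ⊗ ⋯ ⊗ v n` with local factors `v i : ℂ^{α i}`.  Throughout, a tensor in
`ℂ^{α 1} ⊗ ⋯ ⊗ ℂ^{α n}` (each local space `ℂ^{α i}` being the space `α i → ℂ`
with its standard basis) is identified with its coefficient array, a function
`(∀ i, α i) → ℂ` on multi-indices. -/
def prodTensor {ι : Type} [Fintype ι] {α : ι → Type} (v : ∀ i, α i → ℂ) :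
    (∀ i, α i) → ℂ :=
  fun j => ∏ i, v i (j i)

/-- `T` has tensor rank at most `r`: it is a sum of `r` simple tensors. -/
def HasRankLE {ι : Type} [Fintype ι] {α : ι → Type} (T : (∀ i, α i) → ℂ) (r : ℕ) : Prop :=
  ∃ v : Fin r → ∀ i, α i → ℂ, T = ∑ p, prodTensor (v p)

/-- The tensor rank of `T`. -/
def tensorRank {ι : Type} [Fintype ι] {α : ι → Type} (T : (∀ i, α i) → ℂ) : ℕ :=
  sInf {r | HasRankLE T r}

/-- The border rank of `T`: the smallest `r` such that `T` is a limit of tensors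
of rank at most `r`. -/
def borderRank {ι : Type} [Fintype ι] {α : ι → Type} (T : (∀ i, α i) → ℂ) : ℕ :=
  sInf {r | T ∈ closure {S : (∀ i, α i) → ℂ | HasRankLE S r}}

/-- The slice of `T` in the `i`-th factor determined by the multi-index `m`
(the value of `m` at `i` is irrelevant). -/
def sliceAt {ι : Type} [DecidableEq ι] {α : ι → Type} (T : (∀ i, α i) → ℂ) (i : ι)
    (m : ∀ j, α j) : α i → ℂ :=
  fun k => T (Function.update m i k)

/-- `T ∈ V' ⊗ (⊗_{j ≠ i} V_j)` in the `i`-th factor: all `i`-th slices of `T`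
lie in the subspace `V'`. -/
def FactorIn {ι : Type} [DecidableEq ι] {α : ι → Type} (T : (∀ i, α i) → ℂ) (i : ι)
    (V' : Submodule ℂ (α i → ℂ)) : Prop :=
  ∀ m : ∀ j, α j, sliceAt T i m ∈ V'

/-- `T` is concise in the `i`-th factor: `T ∉ V' ⊗ (⊗_{j ≠ i} V_j)` for every
proper subspace `V' ⊊ V_i`. -/
def Concise {ι : Type} [DecidableEq ι] {α : ι → Type} (T : (∀ i, α i) → ℂ) (i : ι) : Prop :=
  ∀ V' : Submodule ℂ (α i → ℂ), FactorIn T i V' → V' = ⊤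

/-- Contraction `⟨f|T` of the first factor of `T` with a covector `f`. -/
def contractFirst {n : ℕ} {α : Fin (n + 1) → Type} (f : (α 0 → ℂ) →ₗ[ℂ] ℂ)
    (T : (∀ i, α i) → ℂ) : (∀ i : Fin n, α i.succ) → ℂ :=
  fun m => f (fun k => T (Fin.cons k m))

/-- Persistent tensors, defined inductively: a bipartite tensor is persistent
iff it is `1`-concise; an `n`-partite tensor (`n > 2`) is persistent iff it is
`1`-concise and there is a proper subspace `S ⊊ V₁^∨` such that `⟨f|T` is
persistent whenever `f ∉ S`. -/
def Persistent : {n : ℕ} → {α : Fin n → Type} → ((∀ i, α i) → ℂ) → Prop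
  | 0, _, _ => False
  | 1, _, _ => False
  | 2, _, T => Concise T 0
  | (n + 3), α, T =>
      Concise T 0 ∧
      ∃ S : Submodule ℂ ((α 0 → ℂ) →ₗ[ℂ] ℂ), S ≠ ⊤ ∧
        ∀ f : (α 0 → ℂ) →ₗ[ℂ] ℂ, f ∉ S → Persistent (contractFirst f T)

/-- Apply the linear maps with matrices `A i` to the factors of `T`
(the coordinate form of `(A 1 ⊗ ⋯ ⊗ A n) T`). -/
def applyLin {ι : Type} [Fintype ι] [DecidableEq ι] {α β : ι → Type} [∀ i, Fintype (α i)]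
    (A : ∀ i, β i → α i → ℂ) (T : (∀ i, α i) → ℂ) : (∀ i, β i) → ℂ :=
  fun j => ∑ m : ∀ i, α i, (∏ i, A i (j i) (m i)) * T m

/-- `T` can be transformed into `S` via SLOCC. -/
def SLOCCto {ι : Type} [Fintype ι] [DecidableEq ι] {α β : ι → Type} [∀ i, Fintype (α i)]
    (T : (∀ i, α i) → ℂ) (S : (∀ i, β i) → ℂ) : Prop :=
  ∃ A : ∀ i, β i → α i → ℂ, applyLin A T = S

/-- `T` degenerates into `S` via SLOCC: there are local maps `A i (ε)` with
entries polynomial in `ε` and an approximation degree `e` with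
`lim_{ε → 0} ε⁻ᵉ (A 1 (ε) ⊗ ⋯ ⊗ A n (ε)) T = S`. -/
def Degenerates {ι : Type} [Fintype ι] [DecidableEq ι] {α β : ι → Type} [∀ i, Fintype (α i)]
    (T : (∀ i, α i) → ℂ) (S : (∀ i, β i) → ℂ) : Prop :=
  ∃ (A : ∀ i, β i → α i → Polynomial ℂ) (e : ℕ),
    Filter.Tendsto
      (fun ε : ℂ => (ε ^ e)⁻¹ • applyLin (fun i r c => (A i r c).eval ε) T)
      (nhdsWithin 0 {0}ᶜ) (nhds S)

/-- The rank of the flattening of `T` across the bipartition `I | Iᶜ`. -/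
def flatRank {ι : Type} [Fintype ι] [DecidableEq ι] {α : ι → Type}
    [∀ i, Fintype (α i)] (T : (∀ i, α i) → ℂ) (I : Finset ι) : ℕ :=
  Matrix.rank (Matrix.of fun (a : ∀ i : {x // x ∈ I}, α i.1) (b : ∀ i : {x // x ∉ I}, α i.1) =>
    T fun i => if h : i ∈ I then a ⟨i, h⟩ else b ⟨i, h⟩)

/-- The direct sum `T ⊕ S` of two `n`-partite tensors, a tensor with `i`-th
local space `U_i ⊕ V_i`. -/
def directSum {ι : Type} [Fintype ι] {α β : ι → Type}
    (T : (∀ i, α i) → ℂ) (S : (∀ i, β i) → ℂ) : (∀ i, α i ⊕ β i) → ℂ :=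
  fun j =>
    if h : ∀ i, (j i).isLeft then T (fun i => (j i).getLeft (h i))
    else if h' : ∀ i, (j i).isRight then S (fun i => (j i).getRight (h' i))
    else 0

/-- The Kronecker product `T ⊠ S` of two `n`-partite tensors, an `n`-partite
tensor with `i`-th local space `U_i ⊗ V_i`. -/
def kron {ι : Type} {α β : ι → Type} (T : (∀ i, α i) → ℂ) (S : (∀ i, β i) → ℂ) :
    (∀ i, α i × β i) → ℂ :=
  fun j => T (fun i => (j i).1) * S (fun i => (j i).2)

/-- The outer (tensor) product `T ⊗ S` of an `n`-partite and an `m`-partite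
tensor, regarded as an `(n+m)`-partite tensor. -/
def outer {ι κ : Type} {α : ι → Type} {β : κ → Type}
    (T : (∀ i, α i) → ℂ) (S : (∀ k, β k) → ℂ) :
    (∀ x : ι ⊕ κ, Sum.elim α β x) → ℂ :=
  fun j => T (fun i => j (Sum.inl i)) * S (fun k => j (Sum.inr k))

/-- The `m`-fold Kronecker power `T^{⊠ m}` of an `n`-partite tensor with all
local spaces `ℂ^d`: an `n`-partite tensor with local spaces `(ℂ^d)^{⊗ m}`. -/
def kpow (d n : ℕ) (T : (Fin n → Fin d) → ℂ) (m : ℕ) :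
    (Fin n → (Fin m → Fin d)) → ℂ :=
  fun j => ∏ t : Fin m, T (fun i => j i t)

/-- The `n`-qubit W state `W_n = Σ_{i} |0⟩^{⊗(n-i-1)} ⊗ |1⟩ ⊗ |0⟩^{⊗ i}`:
its coefficient on a multi-index is `1` iff exactly one entry is `1`. -/
def Wstate (n : ℕ) : (Fin n → Fin 2) → ℂ :=
  fun m => if (∑ i, (m i : ℕ)) = 1 then 1 else 0

/-- The `n`-qudit GHZ state `G(d,n) = Σ_{j=0}^{d-1} |j⟩^{⊗ n}`. -/
def Gstate (d n : ℕ) : (Fin n → Fin d) → ℂ :=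
  fun m => if ∃ j : Fin d, ∀ i, m i = j then 1 else 0

/-- The `n`-qudit L state `L(d,n) = Σ_{j₁+⋯+jₙ = d-1} |j₁ ⋯ jₙ⟩`. -/
def Lstate (d n : ℕ) : (Fin n → Fin d) → ℂ :=
  fun m => if (∑ i, (m i : ℕ)) = d - 1 then 1 else 0

/-- The `n`-qudit M state
`M(d,n) = Σᵢ |0⟩^{⊗(n-i-1)} |d-1⟩ |0⟩^{⊗ i}
  + Σ_{i+k+l=n-2} Σ_{j=1}^{d-2} |0⟩^{⊗i} |j⟩ |0⟩^{⊗k} |d-j-1⟩ |0⟩^{⊗l}`: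
its coefficient on a multi-index is `1` iff the entries sum to `d-1` and at
most two entries are nonzero. -/
def Mstate (d n : ℕ) : (Fin n → Fin d) → ℂ :=
  fun m =>
    if (∑ i, (m i : ℕ)) = d - 1 ∧
        (Finset.univ.filter fun i => (m i : ℕ) ≠ 0).card ≤ 2 then 1 else 0

/-- The `n`-qudit N state
`N(d,n) = |0⟩^{⊗(n-1)} |d-1⟩ + Σ_{i=0}^{n-2} Σ_{j=1}^{d-1} |0⟩^{⊗(n-i-2)} |j⟩ |0⟩^{⊗i} |d-j-1⟩`:
its coefficient on a multi-index is `1` iff the entries sum to `d-1` and at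
most one of the first `n-1` entries is nonzero. -/
def Nstate (d n : ℕ) : (Fin n → Fin d) → ℂ :=
  fun m =>
    if (∑ i, (m i : ℕ)) = d - 1 ∧
        (Finset.univ.filter fun i : Fin n => (i : ℕ) + 1 < n ∧ (m i : ℕ) ≠ 0).card ≤ 1
    then 1 else 0

/-- Apply a linear endomorphism `π` of the `i`-th local space to the `i`-th
factor of `T`, i.e. `(id^{⊗(i-1)} ⊗ π ⊗ id^{⊗(n-i)}) T`. -/
def applyAtFactor {ι : Type} [DecidableEq ι] {α : ι → Type}
    (T : (∀ i, α i) → ℂ) (i : ι) (π : (α i → ℂ) →ₗ[ℂ] (α i → ℂ)) :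
    (∀ j, α j) → ℂ :=
  fun j => π (sliceAt T i j) (j i)

end

section Aux
open Finset

/-- Generalized W state with coefficient `c` on `|0…0⟩`. -/
noncomputable def Wc (n : ℕ) (c : ℂ) : (Fin n → Fin 2) → ℂ :=
  fun m => if (∑ i, (m i : ℕ)) = 1 then 1 else if (∑ i, (m i : ℕ)) = 0 then c else 0

lemma Wstate_eq_Wc (n : ℕ) : Wstate n = Wc n 0 := by
  funext m
  unfold Wstate Wc
  split_ifs <;> simp

lemma sum_cons_val {n : ℕ} (k : Fin 2) (m : Fin n → Fin 2) :
    (∑ i, ((Fin.cons k m : Fin (n+1) → Fin 2) i : ℕ)) = (k : ℕ) + ∑ i, (m i : ℕ) := by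
  rw [Fin.sum_univ_succ]
  simp

lemma Wc_cons_zero {n : ℕ} (c : ℂ) (m : Fin n → Fin 2) :
    Wc (n+1) c (Fin.cons 0 m) = Wc n c m := by
  unfold Wc
  rw [sum_cons_val]
  norm_num

lemma Wc_cons_one {n : ℕ} (c : ℂ) (m : Fin n → Fin 2) :
    Wc (n+1) c (Fin.cons 1 m) = if (∑ i, (m i : ℕ)) = 0 then 1 else 0 := by
  unfold Wc
  rw [sum_cons_val]
  have h1 : ((1 : Fin 2) : ℕ) = 1 := rfl
  rw [h1]
  split_ifs <;> first | rfl | omega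

/-- The substitution lemma: if `T` has rank ≤ r and its `|1⟩`-slice in the first
factor is nonzero, then some combination `T₀ + c T₁` of the slices has rank ≤ r-1. -/
lemma hasRankLE_slice_comb {n r : ℕ} (hn : 0 < n) {T : (Fin (n+1) → Fin 2) → ℂ}
    (h : HasRankLE T r)
    (hS1 : (fun m : Fin n → Fin 2 => T (Fin.cons 1 m)) ≠ 0) :
    ∃ (c : ℂ) (s : ℕ), r = s + 1 ∧
      HasRankLE (fun m : Fin n → Fin 2 => T (Fin.cons 0 m) + c * T (Fin.cons 1 m)) s := by
  obtain ⟨v, hv⟩ := h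
  set P : Fin r → (Fin n → Fin 2) → ℂ := fun p m => ∏ i : Fin n, v p i.succ (m i) with hP
  have hslice : ∀ (k : Fin 2) (m : Fin n → Fin 2),
      T (Fin.cons k m) = ∑ p, v p 0 k * P p m := by
    intro k m
    rw [hv]
    rw [Finset.sum_apply]
    refine Finset.sum_congr rfl fun p _ => ?_
    unfold prodTensor
    rw [Fin.prod_univ_succ]
    simp [hP]
  have hex : ∃ p₀, v p₀ 0 1 ≠ 0 := by
    by_contra hall
    push_neg at hall
    apply hS1
    funext m
    simp [hslice, hall]
  obtain ⟨p₀, hp₀⟩ := hex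
  obtain ⟨s, rfl⟩ : ∃ s, r = s + 1 := ⟨r - 1, by have := p₀.pos; omega⟩
  set c : ℂ := -(v p₀ 0 0) / (v p₀ 0 1) with hc
  have hc0 : v p₀ 0 0 + c * v p₀ 0 1 = 0 := by
    rw [hc, div_mul_cancel₀ _ hp₀]
    ring
  refine ⟨c, s, rfl, ?_⟩
  set i0 : Fin n := ⟨0, hn⟩
  set coef : Fin (s+1) → ℂ := fun p => v p 0 0 + c * v p 0 1 with hcoef
  refine ⟨fun q i k => (if i = i0 then coef (p₀.succAbove q) else 1) * v (p₀.succAbove q) i.succ k, ?_⟩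
  funext m
  rw [Finset.sum_apply]
  have hw : ∀ q : Fin s,
      prodTensor (fun i k => (if i = i0 then coef (p₀.succAbove q) else 1) *
        v (p₀.succAbove q) i.succ k) m
        = coef (p₀.succAbove q) * P (p₀.succAbove q) m := by
    intro q
    unfold prodTensor
    rw [Finset.prod_mul_distrib]
    congr 1
    rw [Finset.prod_ite_eq' Finset.univ i0 (fun _ => coef (p₀.succAbove q))]
    simp
  simp_rw [hw]
  have hlhs : T (Fin.cons 0 m) + c * T (Fin.cons 1 m) = ∑ p, coef p * P p m := by
    rw [hslice 0 m, hslice 1 m, Finset.mul_sum, ← Finset.sum_add_distrib]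
    refine Finset.sum_congr rfl fun p _ => ?_
    simp [hcoef]
    ring
  rw [hlhs, Fin.sum_univ_succAbove (fun p => coef p * P p m) p₀]
  have hz : coef p₀ = 0 := hc0
  rw [hz, zero_mul, zero_add]

lemma sum_eq_one_iff {n : ℕ} (m : Fin n → Fin 2) :
    (∑ i, (m i : ℕ)) = 1 ↔ ∃ p : Fin n, ∀ i, m i = if i = p then 1 else 0 := by
  constructor
  · intro h
    have hex : ∃ p, (m p : ℕ) ≠ 0 := by
      by_contra hall
      push_neg at hall
      rw [Finset.sum_eq_zero (fun i _ => hall i)] at h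
      omega
    obtain ⟨p, hp⟩ := hex
    have hmp : (m p : ℕ) = 1 := by have := (m p).is_lt; omega
    have hrest : ∑ i ∈ Finset.univ.erase p, (m i : ℕ) = 0 := by
      have hadd : (m p : ℕ) + ∑ i ∈ Finset.univ.erase p, (m i : ℕ) = ∑ i, (m i : ℕ) := by
        simpa using Finset.add_sum_erase Finset.univ (fun i => (m i : ℕ)) (Finset.mem_univ p)
      omega
    refine ⟨p, fun i => ?_⟩
    by_cases hip : i = p
    · subst hip
      simp only [if_pos rfl]
      exact Fin.ext hmp
    · rw [if_neg hip]
      have : (m i : ℕ) = 0 :=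
        (Finset.sum_eq_zero_iff).1 hrest i (Finset.mem_erase.2 ⟨hip, Finset.mem_univ i⟩)
      exact Fin.ext this
  · rintro ⟨p, hp⟩
    have : ∀ i, (m i : ℕ) = if i = p then 1 else 0 := by
      intro i
      rw [hp i]
      by_cases hip : i = p <;> simp [hip]
    simp_rw [this]
    simp

lemma W_hasRankLE (n : ℕ) : HasRankLE (Wstate n) n := by
  refine ⟨fun p i k => if k = (if i = p then 1 else 0) then 1 else 0, ?_⟩
  funext m
  rw [Finset.sum_apply]
  have hprod : ∀ p : Fin n,
      prodTensor (fun i k => if k = (if i = p then (1 : Fin 2) else 0) then (1:ℂ) else 0) m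
        = if (∀ i, m i = (if i = p then 1 else 0)) then 1 else 0 := by
    intro p
    unfold prodTensor
    rw [Finset.prod_boole]
    simp
  simp_rw [hprod]
  unfold Wstate
  by_cases h : (∑ i, (m i : ℕ)) = 1
  · obtain ⟨p, hp⟩ := (sum_eq_one_iff m).1 h
    rw [if_pos h]
    have huniq : ∀ q : Fin n, (∀ i, m i = (if i = q then 1 else 0)) ↔ q = p := by
      intro q
      constructor
      · intro hq
        have h2 := hq q
        rw [if_pos rfl] at h2
        have h1 := hp q
        by_contra hqp
        rw [if_neg hqp, h2] at h1
        exact absurd h1 (by decide)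
      · rintro rfl; exact hp
    simp_rw [huniq]
    simp
  · rw [if_neg h]
    have : ∀ p : Fin n, ¬ (∀ i, m i = (if i = p then 1 else 0)) := by
      intro p hp
      exact h ((sum_eq_one_iff m).2 ⟨p, hp⟩)
    rw [Finset.sum_eq_zero]
    intro p _
    rw [if_neg (this p)]

lemma Wc_lb_two (c : ℂ) (r : ℕ) (h : HasRankLE (Wc 2 c) r) : 2 ≤ r := by
  by_contra hr
  push_neg at hr
  interval_cases r
  · obtain ⟨v, hv⟩ := h
    have h01 := congrFun hv ![0, 1]
    simp [Wc, Fin.sum_univ_two] at h01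
  · obtain ⟨v, hv⟩ := h
    have h01 := congrFun hv ![0, 1]
    have h10 := congrFun hv ![1, 0]
    have h11 := congrFun hv ![1, 1]
    simp [Wc, Fin.sum_univ_two, prodTensor, Fin.prod_univ_two] at h01 h10 h11
    rcases h11 with hz | hz
    · rw [hz, zero_mul] at h10
      exact one_ne_zero h10
    · rw [hz, mul_zero] at h01
      exact one_ne_zero h01

lemma Wc_lb : ∀ n, 2 ≤ n → ∀ (c : ℂ) (r : ℕ), HasRankLE (Wc n c) r → n ≤ r := by
  intro n hn
  induction n, hn using Nat.le_induction with
  | base => exact fun c r h => Wc_lb_two c r h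
  | succ n hn ih =>
    intro c r h
    have hn' : 0 < n := by omega
    have hS1 : (fun m : Fin n → Fin 2 => Wc (n+1) c (Fin.cons 1 m)) ≠ 0 := by
      intro h0
      have := congrFun h0 (fun _ => 0)
      rw [Wc_cons_one] at this
      simp at this
    obtain ⟨c', s, rfl, hs⟩ := hasRankLE_slice_comb hn' h hS1
    have hWc : HasRankLE (Wc n (c + c')) s := by
      have heq : (fun m : Fin n → Fin 2 =>
          Wc (n+1) c (Fin.cons 0 m) + c' * Wc (n+1) c (Fin.cons 1 m)) = Wc n (c + c') := by
        funext m
        rw [Wc_cons_zero, Wc_cons_one]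
        unfold Wc
        by_cases h1 : (∑ i, (m i : ℕ)) = 1
        · have h0 : ¬ (∑ i, (m i : ℕ)) = 0 := by omega
          simp [h1, h0]
        · by_cases h0 : (∑ i, (m i : ℕ)) = 0
          · simp [h1, h0]
          · simp [h1, h0]
      rwa [heq] at hs
    have := ih (c + c') s hWc
    omega

end Aux


/-- the tensor rank of the `n`-qubit W state is `n`. -/
theorem W_tensorRank (n : ℕ) (hn : 2 ≤ n) : tensorRank (Wstate n) = n := by
  have hub : HasRankLE (Wstate n) n := W_hasRankLE n
  have hlb : ∀ r ∈ {r | HasRankLE (Wstate n) r}, n ≤ r := by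
    intro r hr
    exact Wc_lb n hn 0 r (by rwa [Wstate_eq_Wc] at hr)
  exact le_antisymm (Nat.sInf_le hub) (le_csInf ⟨n, hub⟩ hlb)


end QIT
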